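/- For every graph G there exists ᾱ with 0 < ᾱ < 1/ρ(G) such that for all 0 < α ≤ ᾱ, Katz's index with parameter α is strictly rank monotone on G: whenever G' = G + edge x—y, for all z ∉ {x,y}, Katz_G(z) ≤ Katz_G(x) implies Katz_{G'}(z) < Katz_{G'}(x) (and similarly for y). -/

import Mathlib

/-- The spectral radius of a real square matrix: the supremum of the absolute values
of its (complex) eigenvalues. -/
noncomputable def specRad {n : Type*} [Fintype n] [DecidableEq n]
    (M : Matrix n n ℝ) : ℝ :=
  sSup ((fun z : ℂ => ‖z‖) '' spectrum ℂ (M.map (algebraMap ℝ ℂ)))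

/-- Katz's index with parameter `α` of a vertex `v`:
`[𝟏 (I − αG)⁻¹]_v = Σ_{i≥0} α^i (𝟏 G^i)_v`. -/
noncomputable def katz {V : Type*} [Fintype V] [DecidableEq V]
    (A : Matrix V V ℝ) (α : ℝ) (v : V) : ℝ :=
  Matrix.vecMul (fun _ => (1 : ℝ)) (1 - α • A)⁻¹ v

section Aux

variable {V : Type*} [Fintype V] [DecidableEq V]

/-- degree vector of a matrix: column sums -/
noncomputable def dvec (A : Matrix V V ℝ) : V → ℝ :=
  Matrix.vecMul (fun _ => (1 : ℝ)) A

/-- first order part of the Katz index -/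
noncomputable def gfun (A : Matrix V V ℝ) (α : ℝ) : V → ℝ :=
  Matrix.vecMul (dvec A) (1 - α • A)⁻¹

lemma vecMul_smul_mat (v : V → ℝ) (c : ℝ) (M : Matrix V V ℝ) :
    Matrix.vecMul v (c • M) = c • Matrix.vecMul v M := by
  ext j; simp [Matrix.vecMul, dotProduct, Finset.mul_sum]
  congr 1; ext i; ring

lemma katz_eq_one_add (A : Matrix V V ℝ) (α : ℝ)
    (h : IsUnit (1 - α • A).det) (v : V) :
    katz A α v = 1 + α * gfun A α v := by
  set N := (1 - α • A)⁻¹ with hN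
  have hmul : (1 - α • A) * N = 1 := Matrix.mul_nonsing_inv _ h
  have hNeq : N = 1 + α • (A * N) := by
    have : N - α • (A * N) = 1 := by
      calc N - α • (A * N) = (1 - α • A) * N := by
            rw [Matrix.sub_mul, Matrix.one_mul, Matrix.smul_mul]
        _ = 1 := hmul
    linear_combination (norm := abel) this
  have : Matrix.vecMul (fun _ => (1 : ℝ)) N
      = (fun _ => (1 : ℝ)) + α • Matrix.vecMul (dvec A) N := by
    conv_lhs => rw [hNeq]
    rw [Matrix.vecMul_add, Matrix.vecMul_one, vecMul_smul_mat, ← Matrix.vecMul_vecMul]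
    rfl
  have := congrFun this v
  simpa [katz, gfun, Pi.add_apply, Pi.smul_apply, smul_eq_mul] using this

lemma gfun_zero (A : Matrix V V ℝ) : gfun A 0 = dvec A := by
  have : ((1 : Matrix V V ℝ) - (0:ℝ) • A) = 1 := by simp
  simp only [gfun, this]
  rw [show (1 : Matrix V V ℝ)⁻¹ = 1 by simp, Matrix.vecMul_one]

lemma continuousAt_gfun (A : Matrix V V ℝ) (v : V) :
    ContinuousAt (fun α => gfun A α v) 0 := by
  have hM : Continuous fun α : ℝ => (1 : Matrix V V ℝ) - α • A :=
    continuous_const.sub (continuous_id.smul continuous_const)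
  have hdet : Continuous fun α : ℝ => ((1 : Matrix V V ℝ) - α • A).det := hM.matrix_det
  have hadj : Continuous fun α : ℝ => ((1 : Matrix V V ℝ) - α • A).adjugate := hM.matrix_adjugate
  have heq : (fun α => gfun A α v)
      = fun α => (((1 : Matrix V V ℝ) - α • A).det)⁻¹ *
          (∑ u, dvec A u * ((1 : Matrix V V ℝ) - α • A).adjugate u v) := by
    funext α
    simp only [gfun, Matrix.inv_def, Ring.inverse_eq_inv']
    rw [vecMul_smul_mat]
    simp [Matrix.vecMul, dotProduct]
  rw [heq]
  have hdet0 : ((1 : Matrix V V ℝ) - (0:ℝ) • A).det ≠ 0 := by simp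
  refine ContinuousAt.mul (hdet.continuousAt.inv₀ hdet0) ?_
  exact (continuous_finset_sum _ fun u _ =>
    continuous_const.mul ((hadj.matrix_elem u v))).continuousAt

/-- Good behaviour of parameter α for matrix A -/
def Qprop (A : Matrix V V ℝ) (α : ℝ) : Prop :=
  IsUnit ((1 : Matrix V V ℝ) - α • A).det ∧
    ∀ u v : V, dvec A u < dvec A v → gfun A α u < gfun A α v

lemma eventually_Q (A : Matrix V V ℝ) : ∀ᶠ α in nhds (0:ℝ), Qprop A α := by
  have hM : Continuous fun α : ℝ => (1 : Matrix V V ℝ) - α • A :=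
    continuous_const.sub (continuous_id.smul continuous_const)
  have hdet : Continuous fun α : ℝ => ((1 : Matrix V V ℝ) - α • A).det := hM.matrix_det
  have h1 : ∀ᶠ α in nhds (0:ℝ), IsUnit ((1 : Matrix V V ℝ) - α • A).det := by
    have : ∀ᶠ α in nhds (0:ℝ), ((1 : Matrix V V ℝ) - α • A).det ≠ 0 :=
      hdet.continuousAt.eventually_ne (by simp)
    exact this.mono fun α h => isUnit_iff_ne_zero.mpr h
  have h2 : ∀ᶠ α in nhds (0:ℝ), ∀ u v : V, dvec A u < dvec A v →
      gfun A α u < gfun A α v := by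
    rw [Filter.eventually_all]
    intro u
    rw [Filter.eventually_all]
    intro v
    by_cases hd : dvec A u < dvec A v
    · have := (continuousAt_gfun A u).eventually_lt (continuousAt_gfun A v)
        (by rw [gfun_zero]; exact hd)
      exact this.mono fun α h _ => h
    · exact Filter.Eventually.of_forall fun α h => absurd h hd
  exact h1.and h2

open SimpleGraph in
lemma dvec_apply (H : SimpleGraph V) [DecidableRel H.Adj] (v : V) :
    dvec (H.adjMatrix ℝ) v = ∑ u, (H.adjMatrix ℝ) u v := by
  simp [dvec, Matrix.vecMul, dotProduct]

lemma adjMatrix_inst_irrel (H : SimpleGraph V) (i1 i2 : DecidableRel H.Adj) :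
    @SimpleGraph.adjMatrix ℝ V H i1 _ _ = @SimpleGraph.adjMatrix ℝ V H i2 _ _ := by
  have : i1 = i2 := funext fun a => funext fun b => Subsingleton.elim _ _
  rw [this]

end Aux

open scoped Classical in
/-- For every graph `G` there is a threshold `ᾱ`, with `0 < ᾱ < 1/ρ(G)`, such that
for all `0 < α ≤ ᾱ` Katz's index with parameter `α` is strictly rank monotone on
`G`: whenever `G'` is obtained from `G` by adding an edge between non-adjacent
vertices `x` and `y`, every vertex `z ∉ {x, y}` whose Katz score in `G` was at most
that of `x` (resp. `y`) has Katz score in `G'` strictly less than that of `x`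
(resp. `y`). -/
theorem katz_rank_monotone_small_alpha {V : Type*} [Fintype V] [DecidableEq V]
    (G : SimpleGraph V) :
    ∃ ᾱ : ℝ, 0 < ᾱ ∧ ᾱ * specRad (G.adjMatrix ℝ) < 1 ∧
      ∀ α : ℝ, 0 < α → α ≤ ᾱ →
        ∀ x y : V, x ≠ y → ¬ G.Adj x y →
          ∀ G' : SimpleGraph V, G' = G ⊔ SimpleGraph.fromEdgeSet {s(x, y)} →
            ∀ z : V, z ≠ x → z ≠ y →
              (katz (G.adjMatrix ℝ) α z ≤ katz (G.adjMatrix ℝ) α x →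
                katz (G'.adjMatrix ℝ) α z < katz (G'.adjMatrix ℝ) α x) ∧
              (katz (G.adjMatrix ℝ) α z ≤ katz (G.adjMatrix ℝ) α y →
                katz (G'.adjMatrix ℝ) α z < katz (G'.adjMatrix ℝ) α y) := by
  -- spectral radius is nonnegative
  set ρ := specRad (G.adjMatrix ℝ) with hρdef
  have hρ : 0 ≤ ρ := by
    apply Real.sSup_nonneg
    rintro r ⟨w, -, rfl⟩
    exact norm_nonneg w
  -- the eventual good behaviour
  have hev : ∀ᶠ α in nhds (0:ℝ),
      Qprop (G.adjMatrix ℝ) α ∧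
      ∀ x y : V, Qprop ((G ⊔ SimpleGraph.fromEdgeSet {s(x, y)}).adjMatrix ℝ) α := by
    refine (eventually_Q _).and ?_
    rw [Filter.eventually_all]
    intro x
    rw [Filter.eventually_all]
    intro y
    exact eventually_Q _
  rw [Metric.eventually_nhds_iff] at hev
  obtain ⟨δ, hδpos, hδ⟩ := hev
  refine ⟨min (δ/2) ((2*(ρ+1))⁻¹), lt_min (by linarith) (by positivity), ?_, ?_⟩
  · have h1 : min (δ/2) ((2*(ρ+1))⁻¹) ≤ (2*(ρ+1))⁻¹ := min_le_right _ _
    have h2 : (0:ℝ) < 2*(ρ+1) := by linarith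
    have h3 : (2*(ρ+1))⁻¹ * ρ < 1 := by
      rw [inv_mul_lt_iff₀ h2]; linarith
    calc min (δ/2) ((2*(ρ+1))⁻¹) * ρ ≤ (2*(ρ+1))⁻¹ * ρ :=
          mul_le_mul_of_nonneg_right h1 hρ
      _ < 1 := h3
  intro α hα hαle x y hxy hGxy G' hG' z hzx hzy
  subst hG'
  set H := G ⊔ SimpleGraph.fromEdgeSet {s(x, y)} with hH
  have hαδ : dist α (0:ℝ) < δ := by
    rw [Real.dist_eq, sub_zero, abs_of_pos hα]
    have := le_trans hαle (min_le_left _ _)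
    linarith
  obtain ⟨hQG, hQG'⟩ := hδ hαδ
  have hQ' : Qprop (H.adjMatrix ℝ) α := hQG' x y
  have hHadj : ∀ u v : V, H.Adj u v ↔ G.Adj u v ∨ (s(u, v) = s(x, y) ∧ u ≠ v) := by
    intro u v
    rw [hH]
    simp [SimpleGraph.sup_adj, SimpleGraph.fromEdgeSet_adj]
  -- degree computations
  have hA'x : ∀ u : V, (H.adjMatrix ℝ) u x
      = (G.adjMatrix ℝ) u x + (if u = y then (1:ℝ) else 0) := by
    intro u
    by_cases huy : u = y
    · subst huy
      have hadj : H.Adj u x := (hHadj u x).mpr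
        (Or.inr ⟨by rw [Sym2.eq_iff]; right; exact ⟨rfl, rfl⟩, fun h => hxy h.symm⟩)
      have hnadj : ¬ G.Adj u x := fun h => hGxy h.symm
      simp [SimpleGraph.adjMatrix_apply, hadj, hnadj]
    · have heq : H.Adj u x ↔ G.Adj u x := by
        rw [hHadj]
        constructor
        · rintro (h | ⟨h, hne⟩)
          · exact h
          · rw [Sym2.eq_iff] at h
            rcases h with ⟨rfl, rfl⟩ | ⟨rfl, -⟩
            · exact absurd rfl hne
            · exact absurd rfl huy
        · exact Or.inl
      simp [SimpleGraph.adjMatrix_apply, heq, huy]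
  have hA'y : ∀ u : V, (H.adjMatrix ℝ) u y
      = (G.adjMatrix ℝ) u y + (if u = x then (1:ℝ) else 0) := by
    intro u
    by_cases hux : u = x
    · subst hux
      have hadj : H.Adj u y := (hHadj u y).mpr
        (Or.inr ⟨by rw [Sym2.eq_iff]; left; exact ⟨rfl, rfl⟩, hxy⟩)
      simp [SimpleGraph.adjMatrix_apply, hadj, hGxy]
    · have heq : H.Adj u y ↔ G.Adj u y := by
        rw [hHadj]
        constructor
        · rintro (h | ⟨h, hne⟩)
          · exact h
          · rw [Sym2.eq_iff] at h
            rcases h with ⟨rfl, -⟩ | ⟨rfl, rfl⟩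
            · exact absurd rfl hux
            · exact absurd rfl hne
        · exact Or.inl
      simp [SimpleGraph.adjMatrix_apply, heq, hux]
  have hA'z : ∀ u : V, (H.adjMatrix ℝ) u z = (G.adjMatrix ℝ) u z := by
    intro u
    have heq : H.Adj u z ↔ G.Adj u z := by
      rw [hHadj]
      constructor
      · rintro (h | ⟨h, -⟩)
        · exact h
        · rw [Sym2.eq_iff] at h
          rcases h with ⟨-, rfl⟩ | ⟨-, rfl⟩
          · exact absurd rfl hzy
          · exact absurd rfl hzx
      · exact Or.inl
    simp [SimpleGraph.adjMatrix_apply, heq]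
  have hdx : dvec (H.adjMatrix ℝ) x = dvec (G.adjMatrix ℝ) x + 1 := by
    rw [dvec_apply, dvec_apply]
    rw [Finset.sum_congr rfl fun u _ => hA'x u, Finset.sum_add_distrib]
    simp
  have hdy : dvec (H.adjMatrix ℝ) y = dvec (G.adjMatrix ℝ) y + 1 := by
    rw [dvec_apply, dvec_apply]
    rw [Finset.sum_congr rfl fun u _ => hA'y u, Finset.sum_add_distrib]
    simp
  have hdz : dvec (H.adjMatrix ℝ) z = dvec (G.adjMatrix ℝ) z := by
    rw [dvec_apply, dvec_apply]
    exact Finset.sum_congr rfl fun u _ => hA'z u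
  have hkG : ∀ v : V, katz (G.adjMatrix ℝ) α v = 1 + α * gfun (G.adjMatrix ℝ) α v :=
    katz_eq_one_add _ α hQG.1
  have hkH : ∀ v : V, katz (H.adjMatrix ℝ) α v = 1 + α * gfun (H.adjMatrix ℝ) α v :=
    katz_eq_one_add _ α hQ'.1
  constructor
  · intro hle
    rw [hkG z, hkG x] at hle
    have hgle : gfun (G.adjMatrix ℝ) α z ≤ gfun (G.adjMatrix ℝ) α x :=
      le_of_mul_le_mul_left (by linarith) hα
    have hdle : dvec (G.adjMatrix ℝ) z ≤ dvec (G.adjMatrix ℝ) x := by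
      by_contra hlt
      push_neg at hlt
      exact absurd hgle (not_le.mpr (hQG.2 _ _ hlt))
    have hdlt : dvec (H.adjMatrix ℝ) z < dvec (H.adjMatrix ℝ) x := by
      rw [hdz, hdx]; linarith
    have hglt := hQ'.2 _ _ hdlt
    have h1 : katz (H.adjMatrix ℝ) α z < katz (H.adjMatrix ℝ) α x := by
      rw [hkH z, hkH x]; nlinarith
    have hMadj : (H.adjMatrix ℝ)
        = @SimpleGraph.adjMatrix ℝ V H (fun a b => Classical.propDecidable (H.Adj a b)) _ _ :=
      adjMatrix_inst_irrel H _ _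
    rw [hMadj] at h1
    exact h1
  · intro hle
    rw [hkG z, hkG y] at hle
    have hgle : gfun (G.adjMatrix ℝ) α z ≤ gfun (G.adjMatrix ℝ) α y :=
      le_of_mul_le_mul_left (by linarith) hα
    have hdle : dvec (G.adjMatrix ℝ) z ≤ dvec (G.adjMatrix ℝ) y := by
      by_contra hlt
      push_neg at hlt
      exact absurd hgle (not_le.mpr (hQG.2 _ _ hlt))
    have hdlt : dvec (H.adjMatrix ℝ) z < dvec (H.adjMatrix ℝ) y := by
      rw [hdz, hdy]; linarith
    have hglt := hQ'.2 _ _ hdlt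
    have h1 : katz (H.adjMatrix ℝ) α z < katz (H.adjMatrix ℝ) α y := by
      rw [hkH z, hkH y]; nlinarith
    have hMadj : (H.adjMatrix ℝ)
        = @SimpleGraph.adjMatrix ℝ V H (fun a b => Classical.propDecidable (H.Adj a b)) _ _ :=
      adjMatrix_inst_irrel H _ _
    rw [hMadj] at h1
    exact h1
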